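/- If a, b are positive integers and x ∈ [0,1] with a/(a+b−1) ≥ 2x, then the regularized incomplete Beta function satisfies I_x(a,b) = P(Bin(a+b−1, x) ≥ a) ≤ exp(−(3/8)(a+b−1)x). -/

import Mathlib

open MeasureTheory

/-- The regularized incomplete Beta function for integer parameters. -/
noncomputable def regIncBeta (a b : ℕ) (x : ℝ) : ℝ :=
  (∫ t in Set.Ioo (0:ℝ) x, t ^ (a - 1) * (1 - t) ^ (b - 1)) /
    ∫ t in Set.Ioo (0:ℝ) 1, t ^ (a - 1) * (1 - t) ^ (b - 1)

/-- `P(Bin(n, x) ≥ a)`. -/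
noncomputable def binomTail (n a : ℕ) (x : ℝ) : ℝ :=
  ∑ k ∈ Finset.Icc a n, (n.choose k : ℝ) * x ^ k * (1 - x) ^ (n - k)

lemma tele_sum (u : ℕ → ℝ) : ∀ (n a : ℕ), a ≤ n + 1 →
    ∑ k ∈ Finset.Icc a n, (u k - u (k+1)) = u a - u (n+1) := by
  intro n
  induction n with
  | zero =>
    intro a ha
    interval_cases a <;> simp
  | succ n ih =>
    intro a ha
    rcases Nat.lt_or_ge a (n+2) with h | h
    · rw [Finset.sum_Icc_succ_top (by omega : a ≤ n + 1), ih a (by omega)]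
      ring
    · have : a = n + 2 := by omega
      subst this
      rw [Finset.Icc_eq_empty (by omega)]
      simp

lemma binomTail_hasDerivAt (n a : ℕ) (ha : 1 ≤ a) (han : a ≤ n) (x : ℝ) :
    HasDerivAt (fun y => binomTail n a y)
      (((n.choose a * a : ℕ) : ℝ) * (x ^ (a-1) * (1-x) ^ (n-a))) x := by
  set u : ℕ → ℝ := fun k => ((n.choose k * k : ℕ) : ℝ) * (x ^ (k-1) * (1-x) ^ (n-k)) with hu
  have hderiv : ∀ k ∈ Finset.Icc a n,
      HasDerivAt (fun y => (n.choose k : ℝ) * y ^ k * (1-y) ^ (n-k)) (u k - u (k+1)) x := by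
    intro k hk
    have h1 : HasDerivAt (fun y : ℝ => (1-y) ^ (n-k))
        (((n-k : ℕ) : ℝ) * (1-x) ^ (n-k-1) * (-1)) x := by
      exact ((hasDerivAt_id x).const_sub (1:ℝ)).pow (n-k)
    have h2 := ((hasDerivAt_pow k x).mul h1).const_mul ((n.choose k : ℝ))
    have hfun : (fun y : ℝ => (n.choose k : ℝ) * y ^ k * (1-y) ^ (n-k))
        = fun y : ℝ => (n.choose k : ℝ) * (y ^ k * (1-y) ^ (n-k)) := by
      funext y; ring
    rw [hfun]
    refine h2.congr_deriv ?_
    rw [hu]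
    simp only
    rw [Nat.choose_succ_right_eq, show n - (k+1) = n - k - 1 by omega]
    push_cast
    ring
  have hsum := HasDerivAt.fun_sum hderiv
  have htail : ∑ k ∈ Finset.Icc a n, (u k - u (k+1)) = u a := by
    rw [tele_sum u n a (by omega)]
    simp [hu, Nat.choose_succ_self]
  rw [htail] at hsum
  have : (fun y => ∑ k ∈ Finset.Icc a n, (n.choose k : ℝ) * y ^ k * (1-y) ^ (n-k))
      = fun y => binomTail n a y := by
    funext y; rw [binomTail]
  rw [this] at hsum
  simpa only [hu] using hsum

theorem regIncBeta_eq_binomTail_le_exp (a b : ℕ) (ha : 1 ≤ a) (hb : 1 ≤ b)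
    (x : ℝ) (hx : x ∈ Set.Icc (0:ℝ) 1)
    (hcond : 2 * x ≤ (a : ℝ) / ((a : ℝ) + b - 1)) :
    regIncBeta a b x = binomTail (a + b - 1) a x ∧
      binomTail (a + b - 1) a x ≤
        Real.exp (-(3 / 8) * ((a : ℝ) + b - 1) * x) := by
  obtain ⟨hx0, hx1⟩ := hx
  set n := a + b - 1 with hn
  have han : a ≤ n := by omega
  have hncast : ((n : ℕ) : ℝ) = (a : ℝ) + b - 1 := by
    have h : (n : ℕ) + 1 = a + b := by omega
    have := congrArg (Nat.cast : ℕ → ℝ) h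
    push_cast at this
    linarith
  have hnR : (1 : ℝ) ≤ (a : ℝ) + b - 1 := by
    have : (1 : ℕ) ≤ n := by omega
    calc (1:ℝ) ≤ (n : ℝ) := by exact_mod_cast this
    _ = _ := hncast
  constructor
  · -- Part 1: identity
    set f : ℝ → ℝ := fun t => t ^ (a-1) * (1-t) ^ (b-1) with hf
    have hfc : Continuous f := by
      apply Continuous.mul (continuous_pow _)
      exact (continuous_const.sub continuous_id).pow _
    set F : ℝ → ℝ := fun y => ∫ t in (0:ℝ)..y, f t with hF
    have hFd : ∀ y : ℝ, HasDerivAt F (f y) y := by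
      intro y
      exact intervalIntegral.integral_hasDerivAt_right (hfc.intervalIntegrable 0 y)
        (hfc.stronglyMeasurableAtFilter volume (nhds y)) hfc.continuousAt
    set c : ℝ := ((n.choose a * a : ℕ) : ℝ) with hc
    have hcpos : 0 < c := by
      rw [hc]
      have h1 := Nat.choose_pos han
      have h2 : 0 < n.choose a * a := Nat.mul_pos h1 ha
      exact_mod_cast h2
    have hGd : ∀ y : ℝ, HasDerivAt (fun z => binomTail n a z) (c * f y) y := by
      intro y
      have := binomTail_hasDerivAt n a ha han y
      rw [show n - a = b - 1 by omega] at this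
      exact this
    set φ : ℝ → ℝ := fun y => c * F y - binomTail n a y with hφ
    have hφd : ∀ y : ℝ, HasDerivAt φ 0 y := by
      intro y
      have := ((hFd y).const_mul c).sub (hGd y)
      exact this.congr_deriv (by simp)
    have hconst : ∀ y : ℝ, φ y = φ 0 := by
      intro y
      exact is_const_of_deriv_eq_zero (fun z => (hφd z).differentiableAt)
        (fun z => (hφd z).deriv) y 0
    have hF0 : F 0 = 0 := intervalIntegral.integral_same
    have hG0 : binomTail n a 0 = 0 := by
      rw [binomTail]
      apply Finset.sum_eq_zero
      intro k hk
      have hk1 : k ≠ 0 := by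
        have := (Finset.mem_Icc.mp hk).1; omega
      simp [zero_pow hk1]
    have hkey : ∀ y : ℝ, c * F y = binomTail n a y := by
      intro y
      have := hconst y
      rw [hφ] at this
      simp only at this
      rw [hF0, hG0] at this
      linarith
    have hG1 : binomTail n a 1 = 1 := by
      rw [binomTail]
      rw [Finset.sum_eq_single n]
      · simp
      · intro k hk hkn
        have : n - k ≠ 0 := by
          have := (Finset.mem_Icc.mp hk).2; omega
        simp [this, zero_pow this]
      · intro h
        exact absurd (Finset.mem_Icc.mpr ⟨han, le_refl n⟩) h
    have hIoo : ∀ y : ℝ, 0 ≤ y → (∫ t in Set.Ioo (0:ℝ) y, t ^ (a-1) * (1-t) ^ (b-1)) = F y := by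
      intro y hy
      rw [hF]
      simp only
      rw [intervalIntegral.integral_of_le hy, MeasureTheory.integral_Ioc_eq_integral_Ioo]
    rw [regIncBeta, hIoo x hx0, hIoo 1 (by norm_num)]
    have e1 : F x = c⁻¹ * binomTail n a x := by
      rw [← hkey x]; field_simp
    have e2 : F 1 = c⁻¹ := by
      rw [← hkey 1] at hG1
      field_simp at hG1 ⊢
      linarith
    rw [e1, e2]
    field_simp
  · -- Part 2: Bernstein bound
    have h1x : (0:ℝ) ≤ 1 - x := by linarith
    have step1 : binomTail n a x ≤
        (1/2:ℝ)^a * ∑ k ∈ Finset.range (n+1),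
          (2*x) ^ k * (1-x) ^ (n-k) * (n.choose k : ℝ) := by
      rw [binomTail, Finset.mul_sum]
      have hsub : Finset.Icc a n ⊆ Finset.range (n+1) := by
        intro k hk
        simp only [Finset.mem_range]
        have := (Finset.mem_Icc.mp hk).2; omega
      calc ∑ k ∈ Finset.Icc a n, (n.choose k : ℝ) * x ^ k * (1-x) ^ (n-k)
          ≤ ∑ k ∈ Finset.Icc a n,
            (1/2:ℝ)^a * ((2*x) ^ k * (1-x) ^ (n-k) * (n.choose k : ℝ)) := by
            apply Finset.sum_le_sum
            intro k hk
            have hka : a ≤ k := (Finset.mem_Icc.mp hk).1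
            have hterm : (0:ℝ) ≤ (n.choose k : ℝ) * x ^ k * (1-x) ^ (n-k) := by
              positivity
            have heq : (1/2:ℝ)^a * ((2*x) ^ k * (1-x) ^ (n-k) * (n.choose k : ℝ))
                = (2:ℝ)^(k-a) * ((n.choose k : ℝ) * x ^ k * (1-x) ^ (n-k)) := by
              rw [mul_pow]
              rw [show (2:ℝ)^k = 2^a * 2^(k-a) by rw [← pow_add]; congr 1; omega]
              field_simp
              have h2a : (1/2:ℝ)^a * 2^a = 1 := by rw [← mul_pow]; norm_num
              linear_combination (x ^ k * ↑(n.choose k) * (1 - x) ^ (n - k)) * h2a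
            rw [heq]
            nlinarith [one_le_pow₀ (by norm_num : (1:ℝ) ≤ 2) (n := k - a)]
        _ ≤ _ := by
            refine Finset.sum_le_sum_of_subset_of_nonneg hsub ?_
            intro k _ _
            positivity
    have step2 : ∑ k ∈ Finset.range (n+1),
        (2*x) ^ k * (1-x) ^ (n-k) * (n.choose k : ℝ) = (1+x)^n := by
      rw [← add_pow]
      congr 1; ring
    have step3 : (1+x)^n ≤ Real.exp ((n:ℝ) * x) := by
      calc (1+x)^n ≤ (Real.exp x)^n := by
            apply pow_le_pow_left₀ (by linarith)
            linarith [Real.add_one_le_exp x]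
        _ = Real.exp ((n:ℝ) * x) := (Real.exp_nat_mul x n).symm
    have step4 : (1/2:ℝ)^a = Real.exp (-((a:ℝ) * Real.log 2)) := by
      rw [Real.exp_neg, Real.exp_nat_mul, Real.exp_log (by norm_num : (0:ℝ) < 2)]
      rw [one_div, inv_pow]
    have hchain : binomTail n a x ≤ Real.exp (-((a:ℝ) * Real.log 2) + (n:ℝ) * x) := by
      rw [Real.exp_add, ← step4]
      calc binomTail n a x
          ≤ (1/2:ℝ)^a * ∑ k ∈ Finset.range (n+1),
              (2*x) ^ k * (1-x) ^ (n-k) * (n.choose k : ℝ) := step1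
        _ = (1/2:ℝ)^a * (1+x)^n := by rw [step2]
        _ ≤ (1/2:ℝ)^a * Real.exp ((n:ℝ) * x) := by
            apply mul_le_mul_of_nonneg_left step3 (by positivity)
    refine hchain.trans (Real.exp_le_exp.mpr ?_)
    set nR : ℝ := (a:ℝ) + b - 1 with hnR'
    have hnpos : (0:ℝ) < nR := by linarith
    have hax : 2 * nR * x ≤ (a:ℝ) := by
      have := (le_div_iff₀ hnpos).mp hcond
      nlinarith
    have hlog : (0.6931471803 : ℝ) < Real.log 2 := Real.log_two_gt_d9
    have ht : 0 ≤ nR * x := by positivity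
    have hlogpos : (0:ℝ) ≤ Real.log 2 := le_of_lt (lt_trans (by norm_num) hlog)
    have hp1 : 2 * nR * x * Real.log 2 ≤ (a:ℝ) * Real.log 2 :=
      mul_le_mul_of_nonneg_right hax hlogpos
    have hp2 : nR * x * 0.6931471803 ≤ nR * x * Real.log 2 :=
      mul_le_mul_of_nonneg_left (le_of_lt hlog) ht
    rw [hncast]
    nlinarith
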